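/- Let G be an r-regular finite simple graph on vertex set V with at least one edge, let λ_min be the minimum eigenvalue of its adjacency matrix M, let S ⊆ V be nonempty with V∖S nonempty, and let a be a real number. If σ(S) ≤ a, then |S| ≤ (a−λ_min)|V|/(r−λ_min). Moreover, |S| = (a−λ_min)|V|/(r−λ_min) if and only if {S, V∖S} is an equitable partition with quotient matrix ((a, r−a), (a−λ_min, r+λ_min−a)). -/

import Mathlib

open Finset Matrix
open scoped Classical

lemma psd_aux {V : Type*} [Fintype V] [DecidableEq V] {M : Matrix V V ℝ}
    (hM : M.IsHermitian) (lmin : ℝ)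
    (hleast : ∀ μ : ℝ, (∃ g : V → ℝ, g ≠ 0 ∧ M.mulVec g = μ • g) → lmin ≤ μ) :
    (M - lmin • 1).PosSemidef := by
  have hsm : (lmin • (1 : Matrix V V ℝ)).IsHermitian := by
    unfold Matrix.IsHermitian
    rw [Matrix.conjTranspose_smul]
    simp
  have hN : (M - lmin • 1).IsHermitian := hM.sub hsm
  refine hN.posSemidef_iff_eigenvalues_nonneg.mpr (fun i => ?_)
  have hb := hN.mulVec_eigenvectorBasis i
  set g : V → ℝ := ⇑(hN.eigenvectorBasis i) with hgdef
  have hg : g ≠ 0 := by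
    intro h
    exact hN.eigenvectorBasis.orthonormal.ne_zero i (by ext x; exact congrFun h x)
  have hMg : M.mulVec g = (hN.eigenvalues i + lmin) • g := by
    have h2 : (M - lmin • 1).mulVec g = M.mulVec g - lmin • g := by
      rw [Matrix.sub_mulVec, Matrix.smul_mulVec, Matrix.one_mulVec]
    rw [h2] at hb
    rw [add_smul, ← hb]
    abel
  have := hleast (hN.eigenvalues i + lmin) ⟨g, hg, hMg⟩
  exact (by linarith : (0:ℝ) ≤ hN.eigenvalues i)

theorem hoffman_type_bound_average_internal_degree
    {V : Type*} [Fintype V] (G : SimpleGraph V) [DecidableRel G.Adj]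
    (r : ℕ) (hreg : G.IsRegularOfDegree r)
    (hedge : ∃ x y, G.Adj x y)
    (lmin : ℝ)
    (hmin : ∃ g : V → ℝ, g ≠ 0 ∧ (G.adjMatrix ℝ).mulVec g = lmin • g)
    (hleast : ∀ μ : ℝ,
      (∃ g : V → ℝ, g ≠ 0 ∧ (G.adjMatrix ℝ).mulVec g = μ • g) → lmin ≤ μ)
    (S : Finset V) (hS : S.Nonempty) (hSc : Sᶜ.Nonempty)
    (a : ℝ)
    (hsigma : (∑ x ∈ S, ((S.filter fun y => G.Adj x y).card : ℝ)) / S.card ≤ a) :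
    (S.card : ℝ) ≤ (a - lmin) * Fintype.card V / ((r : ℝ) - lmin) ∧
    ((S.card : ℝ) = (a - lmin) * Fintype.card V / ((r : ℝ) - lmin) ↔
      ((∀ x ∈ S, ((S.filter fun y => G.Adj x y).card : ℝ) = a ∧
                 ((Sᶜ.filter fun y => G.Adj x y).card : ℝ) = (r : ℝ) - a) ∧
       (∀ x ∈ Sᶜ, ((S.filter fun y => G.Adj x y).card : ℝ) = a - lmin ∧
                  ((Sᶜ.filter fun y => G.Adj x y).card : ℝ) = (r : ℝ) + lmin - a))) := by
  classical
  obtain ⟨x0, y0, hxy⟩ := hedge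
  have hM : (G.adjMatrix ℝ).IsHermitian := by
    ext i j
    simp [Matrix.conjTranspose_apply, SimpleGraph.adj_comm]
  have hPSD := psd_aux hM lmin hleast
  -- lmin ≤ -1
  have hne0 : x0 ≠ y0 := G.ne_of_adj hxy
  have hlm : lmin ≤ -1 := by
    set v : V → ℝ := Pi.single x0 (1:ℝ) - Pi.single y0 (1:ℝ) with hv_def
    have hql := hPSD.dotProduct_mulVec_nonneg v
    have hstar : star v = v := by
      ext z; simp [hv_def, Pi.single_apply]
    rw [hstar, hv_def] at hql
    rw [Matrix.mulVec_sub, Matrix.mulVec_single, Matrix.mulVec_single] at hql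
    rw [dotProduct_sub, sub_dotProduct, sub_dotProduct] at hql
    simp only [single_dotProduct, one_mul] at hql
    simp only [Pi.smul_apply, MulOpposite.op_one, one_smul, Matrix.col_apply,
      Matrix.sub_apply, Matrix.smul_apply, Matrix.one_apply, SimpleGraph.adjMatrix_apply,
      hne0, hne0.symm, hxy, hxy.symm, G.irrefl, if_true, if_false, ite_true, ite_false,
      if_neg hne0, if_neg hne0.symm, smul_eq_mul, mul_one, mul_zero] at hql
    linarith
  -- basic cards
  set n : ℝ := (Fintype.card V : ℝ) with hn_def
  set s : ℝ := (S.card : ℝ) with hs_def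
  have hs0 : 0 < s := by
    have := Finset.card_pos.mpr hS
    rw [hs_def]; exact_mod_cast this
  have hsltn : S.card < Fintype.card V := by
    have h1 : 0 < Sᶜ.card := Finset.card_pos.mpr hSc
    rw [Finset.card_compl] at h1
    omega
  have hsn : s < n := by rw [hs_def, hn_def]; exact_mod_cast hsltn
  have hn0 : 0 < n := lt_trans hs0 hsn
  have hn0' : n ≠ 0 := ne_of_gt hn0
  have hrl : (0:ℝ) < (r:ℝ) - lmin := by
    have : (0:ℝ) ≤ (r:ℝ) := Nat.cast_nonneg r
    linarith
  set t : ℝ := s / n with ht_def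
  set d : V → ℝ := fun x => ((S.filter fun y => G.Adj x y).card : ℝ) with hd_def
  set f : V → ℝ := fun x => (if x ∈ S then (1:ℝ) else 0) - t with hf_def
  -- basic sums
  have h_ind_sum : ∑ x : V, (if x ∈ S then (1:ℝ) else 0) = s := by
    rw [Finset.sum_ite_mem, Finset.univ_inter, Finset.sum_const, nsmul_eq_mul, mul_one, hs_def]
  have htn : t * n = s := by rw [ht_def]; field_simp
  have hfsum : ∑ x : V, f x = 0 := by
    simp only [hf_def]
    rw [Finset.sum_sub_distrib, h_ind_sum, Finset.sum_const, Finset.card_univ, nsmul_eq_mul, ← hn_def]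
    rw [ht_def]; field_simp; ring
  have hd_sum_univ : ∑ x : V, d x = r * s := by
    have hrw : ∀ x : V, d x = ∑ y ∈ S, (if G.Adj x y then (1:ℝ) else 0) := by
      intro x
      rw [hd_def]
      simp [Finset.sum_boole]
    calc ∑ x : V, d x = ∑ x : V, ∑ y ∈ S, (if G.Adj x y then (1:ℝ) else 0) :=
          Finset.sum_congr rfl (fun x _ => hrw x)
      _ = ∑ y ∈ S, ∑ x : V, (if G.Adj x y then (1:ℝ) else 0) := Finset.sum_comm
      _ = ∑ y ∈ S, (r : ℝ) := by
          refine Finset.sum_congr rfl fun y _ => ?_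
          rw [Finset.sum_boole]
          have h2 : univ.filter (fun x => G.Adj x y) = G.neighborFinset y := by
            ext z; simp [SimpleGraph.adj_comm]
          rw [h2]
          rw [SimpleGraph.card_neighborFinset_eq_degree, hreg y]
      _ = r * s := by rw [Finset.sum_const, nsmul_eq_mul, hs_def]; ring
  have hcompl : ∀ x : V, ((Sᶜ.filter fun y => G.Adj x y).card : ℝ) = r - d x := by
    intro x
    have hdisj : Disjoint (S.filter fun y => G.Adj x y) (Sᶜ.filter fun y => G.Adj x y) :=
      Finset.disjoint_filter_filter disjoint_compl_right
    have hsplit : (S.filter fun y => G.Adj x y) ∪ (Sᶜ.filter fun y => G.Adj x y)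
        = univ.filter (fun y => G.Adj x y) := by
      rw [← Finset.filter_union, Finset.union_compl]
    have hcard : (S.filter fun y => G.Adj x y).card + (Sᶜ.filter fun y => G.Adj x y).card
        = (univ.filter (fun y => G.Adj x y)).card := by
      rw [← Finset.card_union_of_disjoint hdisj, hsplit]
    have huniv : univ.filter (fun y => G.Adj x y) = G.neighborFinset x := by
      ext z; simp
    rw [huniv, SimpleGraph.card_neighborFinset_eq_degree, hreg x] at hcard
    have hR : ((S.filter fun y => G.Adj x y).card : ℝ) + ((Sᶜ.filter fun y => G.Adj x y).card : ℝ)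
        = (r : ℝ) := by exact_mod_cast hcard
    have hdx : d x = ((S.filter fun y => G.Adj x y).card : ℝ) := by rw [hd_def]
    rw [hdx]
    linarith
  -- mulVec formula
  have hMf : ∀ x, ((G.adjMatrix ℝ) *ᵥ f) x = d x - (r:ℝ) * t := by
    intro x
    rw [SimpleGraph.adjMatrix_mulVec_apply]
    simp only [hf_def]
    rw [Finset.sum_sub_distrib]
    have h1 : ∑ y ∈ G.neighborFinset x, (if y ∈ S then (1:ℝ) else 0) = d x := by
      rw [Finset.sum_boole, hd_def]
      have hset : (G.neighborFinset x).filter (fun y => y ∈ S) = S.filter (fun y => G.Adj x y) := by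
        ext z; simp [SimpleGraph.mem_neighborFinset, and_comm]
      rw [hset]
    have h2 : ∑ _y ∈ G.neighborFinset x, t = (r:ℝ) * t := by
      rw [Finset.sum_const, SimpleGraph.card_neighborFinset_eq_degree, hreg x, nsmul_eq_mul]
    rw [h1, h2]
  have hNf : ∀ x, ((G.adjMatrix ℝ - lmin • 1) *ᵥ f) x = (d x - (r:ℝ) * t) - lmin * f x := by
    intro x
    rw [Matrix.sub_mulVec, Matrix.smul_mulVec, Matrix.one_mulVec]
    simp only [Pi.sub_apply, Pi.smul_apply, smul_eq_mul]
    rw [hMf x]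
  -- sums with f
  have hfd : ∑ x : V, f x * d x = (∑ x ∈ S, d x) - t * ((r:ℝ) * s) := by
    have h1 : ∀ x : V, f x * d x = (if x ∈ S then d x else 0) - t * d x := by
      intro x
      simp only [hf_def]
      by_cases hx : x ∈ S <;> simp only [hx, if_true, if_false, ite_true, ite_false] <;> ring
    rw [Finset.sum_congr rfl (fun x _ => h1 x), Finset.sum_sub_distrib,
      Finset.sum_ite_mem, Finset.univ_inter, ← Finset.mul_sum, hd_sum_univ]
  have hff : ∑ x : V, f x * f x = s - t * s := by
    have h1 : ∀ x : V, f x * f x = (if x ∈ S then f x else 0) - t * f x := by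
      intro x
      simp only [hf_def]
      by_cases hx : x ∈ S <;> simp only [hx, if_true, if_false, ite_true, ite_false] <;> ring
    rw [Finset.sum_congr rfl (fun x _ => h1 x), Finset.sum_sub_distrib,
      Finset.sum_ite_mem, Finset.univ_inter, ← Finset.mul_sum, hfsum, mul_zero, sub_zero]
    have h2 : ∀ x ∈ S, f x = 1 - t := by intro x hx; simp [hf_def, hx]
    rw [Finset.sum_congr rfl h2, Finset.sum_const, nsmul_eq_mul, hs_def]
    ring
  -- quadratic form
  have hq : star f ⬝ᵥ ((G.adjMatrix ℝ - lmin • 1) *ᵥ f)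
      = ((∑ x ∈ S, d x) - t * ((r:ℝ) * s)) - lmin * (s - t * s) := by
    have hstar : star f = f := by ext z; simp
    rw [hstar, dotProduct]
    have h1 : ∀ x : V, f x * ((G.adjMatrix ℝ - lmin • 1) *ᵥ f) x
        = f x * d x - ((r:ℝ) * t) * f x - lmin * (f x * f x) := by
      intro x; rw [hNf x]; ring
    rw [Finset.sum_congr rfl (fun x _ => h1 x)]
    rw [Finset.sum_sub_distrib, Finset.sum_sub_distrib, ← Finset.mul_sum, ← Finset.mul_sum,
      hfsum, hfd, hff, mul_zero, sub_zero]
  have hq0 : 0 ≤ ((∑ x ∈ S, d x) - t * ((r:ℝ) * s)) - lmin * (s - t * s) := by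
    have := hPSD.dotProduct_mulVec_nonneg f
    rwa [hq] at this
  have he_le : (∑ x ∈ S, d x) ≤ a * s := by
    have h := hsigma
    rw [div_le_iff₀ hs0] at h
    exact h
  -- main inequality
  have hmain : s ≤ (a - lmin) * n / ((r:ℝ) - lmin) := by
    rw [le_div_iff₀ hrl]
    have key : lmin * (s - t * s) + t * ((r:ℝ) * s) ≤ a * s := by linarith
    have hts : t * s * n = s * s := by rw [ht_def]; field_simp
    nlinarith [mul_le_mul_of_nonneg_right key hn0.le, htn, hts, hs0, hn0, mul_pos hs0 hn0]
  refine ⟨hmain, ?_, ?_⟩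
  · -- equality → equitable
    intro heq
    have hsn_eq : s * ((r:ℝ) - lmin) = (a - lmin) * n := by
      rw [heq]; field_simp
    have hts : t * ((r:ℝ) - lmin) = a - lmin := by
      rw [ht_def]
      rw [div_mul_eq_mul_div, hsn_eq, mul_div_assoc, div_self hn0', mul_one]
    have hzero : (a * s - t * ((r:ℝ) * s)) - lmin * (s - t * s) = 0 := by
      linear_combination (-s) * hts
    have he_eq : (∑ x ∈ S, d x) = a * s := by linarith
    have hqzero : star f ⬝ᵥ ((G.adjMatrix ℝ - lmin • 1) *ᵥ f) = 0 := by
      rw [hq]; linarith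
    have hNf0 : (G.adjMatrix ℝ - lmin • 1) *ᵥ f = 0 :=
      (hPSD.dotProduct_mulVec_zero_iff f).mp hqzero
    have hfx : ∀ x : V, d x - (r:ℝ) * t = lmin * f x := by
      intro x
      have h := congrFun hNf0 x
      rw [hNf x] at h
      simp only [Pi.zero_apply] at h
      linarith
    constructor
    · intro x hx
      have hfx1 : f x = 1 - t := by simp [hf_def, hx]
      have h := hfx x
      rw [hfx1] at h
      have h1 : d x = a := by linear_combination h + hts
      exact ⟨h1, by rw [hcompl x, h1]⟩
    · intro x hx
      have hx' : x ∉ S := Finset.mem_compl.mp hx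
      have hfx1 : f x = -t := by simp [hf_def, hx']
      have h := hfx x
      rw [hfx1] at h
      have h1 : d x = a - lmin := by linear_combination h + hts
      exact ⟨h1, by rw [hcompl x, h1]; ring⟩
  · -- equitable → equality
    rintro ⟨h1, h2⟩
    have hS1 : ∑ x ∈ S, d x = a * s := by
      rw [Finset.sum_congr rfl (fun x hx => (h1 x hx).1), Finset.sum_const, nsmul_eq_mul, hs_def]
      ring
    have hcompl_card : (Sᶜ.card : ℝ) = n - s := by
      rw [Finset.card_compl, hn_def, hs_def]
      push_cast [Nat.cast_sub (Finset.card_le_univ S)]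
      ring
    have hS2 : ∑ x ∈ Sᶜ, d x = (n - s) * (a - lmin) := by
      rw [Finset.sum_congr rfl (fun x hx => (h2 x hx).1), Finset.sum_const, nsmul_eq_mul,
        hcompl_card]
    have hsplit : (∑ x ∈ S, d x) + (∑ x ∈ Sᶜ, d x) = (r:ℝ) * s := by
      rw [Finset.sum_add_sum_compl, hd_sum_univ]
    rw [eq_div_iff (ne_of_gt hrl)]
    rw [hS1, hS2] at hsplit
    linear_combination -hsplit
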